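/- arXiv:1402.2862 — 2 statements merged into one kernel-verified Lean document; each statement's English description precedes it below -/
import Mathlib

section
/- Let f:[0,1]\{c}→[0,1] be a contracting Lorenz map and I⊆[0,1] an open interval. Then at least one of the following holds: (i) there exists n≥0 such that fⁿ restricted to I is a homeomorphism onto its image and c∈fⁿ(I); (ii) I is a wandering interval; (iii) there is a periodic attractor Λ whose basin β(Λ)={x : ω_f(x)=Λ} meets I; (iv) f has a weak repeller. -/
open Set Filter Topology Function MeasureTheory

noncomputable section

/-- ω-limit set of `x` under `f`: accumulation points of the forward orbit. -/
def omegaLim (f : ℝ → ℝ) (x : ℝ) : Set ℝ :=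
  {y | ∃ φ : ℕ → ℕ, StrictMono φ ∧ Tendsto (fun n => f^[φ n] x) atTop (𝓝 y)}

/-- Forward orbit of `x` under `f`. -/
def fwdOrbit (f : ℝ → ℝ) (x : ℝ) : Set ℝ := {y | ∃ n : ℕ, f^[n] x = y}

/-- `x` is a periodic point of `f`. -/
def IsPerPt (f : ℝ → ℝ) (x : ℝ) : Prop := ∃ n : ℕ, 0 < n ∧ f^[n] x = x

/-- Preimage of a point, with the Lorenz-map convention that the critical point `c`
is a preimage of each one-sided critical value. -/
def extPreim (f : ℝ → ℝ) (c y : ℝ) : Set ℝ :=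
  f ⁻¹' {y} ∪ {z | z = c ∧ (Tendsto f (𝓝[<] c) (𝓝 y) ∨ Tendsto f (𝓝[>] c) (𝓝 y))}

/-- Iterated preimages with the Lorenz-map convention. -/
def extPreimIter (f : ℝ → ℝ) (c : ℝ) : ℕ → ℝ → Set ℝ
  | 0, x => {x}
  | n + 1, x => {z | ∃ y ∈ extPreimIter f c n x, z ∈ extPreim f c y}

/-- α-limit set of `x` under `f` (with critical point `c`). -/
def alphaLim (f : ℝ → ℝ) (c x : ℝ) : Set ℝ :=
  {y | ∃ (φ : ℕ → ℕ) (z : ℕ → ℝ), StrictMono φ ∧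
    (∀ j, z j ∈ extPreimIter f c (φ j) x) ∧ Tendsto z atTop (𝓝 y)}

/-- A periodic attractor: a finite set `Λ` such that `{x | ω_f(x) = Λ}` has
nonempty interior. -/
def IsPeriodicAttractor (f : ℝ → ℝ) (Λ : Set ℝ) : Prop :=
  Λ.Finite ∧ (interior {x | omegaLim f x = Λ}).Nonempty

/-- A weak repeller: a non-hyperbolic periodic point not contained in any periodic
attractor. -/
def IsWeakRepeller (f : ℝ → ℝ) (p : ℝ) : Prop :=
  IsPerPt f p ∧ |deriv (f^[minimalPeriod f p]) p| = 1 ∧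
  ∀ Λ : Set ℝ, IsPeriodicAttractor f Λ → p ∉ Λ

/-- A `C^k` Lorenz map on `[0,1]` with critical point `c`. -/
structure IsLorenzMap (k : ℕ) (f : ℝ → ℝ) (c : ℝ) : Prop where
  c_pos : 0 < c
  c_lt_one : c < 1
  map_zero : f 0 = 0
  map_one : f 1 = 1
  mapsTo : MapsTo f (Icc (0:ℝ) 1 \ {c}) (Icc (0:ℝ) 1)
  smooth : ContDiffOn ℝ (k : ℕ∞) f (Icc (0:ℝ) 1 \ {c})
  deriv_pos : ∀ x ∈ Icc (0:ℝ) 1 \ {c}, 0 < deriv f x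

/-- The Lorenz map `f` is contracting: `f' → 0` at the critical point. -/
def IsContractingAt (f : ℝ → ℝ) (c : ℝ) : Prop :=
  Tendsto (deriv f) (𝓝[≠] c) (𝓝 0)

/-- Non-flatness of a contracting Lorenz map at its critical point. -/
def IsNonFlat (f : ℝ → ℝ) (c : ℝ) : Prop :=
  ∃ (α a b : ℝ) (φ₀ φ₁ : ℝ → ℝ), 1 < α ∧ a ∈ Icc (0:ℝ) 1 ∧ b ∈ Icc (0:ℝ) 1 ∧
    ContDiffOn ℝ 2 φ₀ (Icc 0 c) ∧ ContDiffOn ℝ 2 φ₁ (Icc c 1) ∧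
    StrictMonoOn φ₀ (Icc 0 c) ∧ StrictMonoOn φ₁ (Icc c 1) ∧
    (∀ x ∈ Icc (0:ℝ) c, 0 < derivWithin φ₀ (Icc 0 c) x) ∧
    (∀ x ∈ Icc c (1:ℝ), 0 < derivWithin φ₁ (Icc c 1) x) ∧
    BijOn φ₀ (Icc 0 c) (Icc 0 (a ^ (1/α))) ∧
    BijOn φ₁ (Icc c 1) (Icc 0 (b ^ (1/α))) ∧
    (∀ x ∈ Ico (0:ℝ) c, f x = a - φ₀ (c - x) ^ α) ∧
    (∀ x ∈ Ioc c (1:ℝ), f x = 1 - b + φ₁ x ^ α)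

/-- Negative Schwarzian derivative on `[0,1] \ {c}`. -/
def HasNegSchwarzian (f : ℝ → ℝ) (c : ℝ) : Prop :=
  ∀ x ∈ Icc (0:ℝ) 1 \ {c}, deriv f x ≠ 0 →
    deriv (deriv (deriv f)) x / deriv f x
      - (3 / 2) * (deriv (deriv f) x / deriv f x) ^ 2 < 0

/-- Basin of attraction of a set. -/
def basin (f : ℝ → ℝ) (A : Set ℝ) : Set ℝ := {x | omegaLim f x ⊆ A}

/-- `S` is residual in `T`: it contains the trace on `T` of a countable intersection
of open sets, each dense in `T`. -/
def ResidualIn (S T : Set ℝ) : Prop :=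
  ∃ U : ℕ → Set ℝ, (∀ n, IsOpen (U n)) ∧ (∀ n, T ⊆ closure (U n ∩ T)) ∧
    (⋂ n, U n) ∩ T ⊆ S

/-- Milnor topological attractor. -/
def IsTopAttractor (f : ℝ → ℝ) (A : Set ℝ) : Prop :=
  IsCompact A ∧
  (∃ V : Set ℝ, IsOpen V ∧ V.Nonempty ∧ ResidualIn (basin f A) V) ∧
  ∀ A' : Set ℝ, IsClosed A' → MapsTo f A' A' → A' ⊆ A → A' ≠ A →
    ∃ V : Set ℝ, IsOpen V ∧ V.Nonempty ∧ ResidualIn (basin f A \ basin f A') V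

/-- Wandering interval. -/
def IsWanderingInterval (f : ℝ → ℝ) (I : Set ℝ) : Prop :=
  (∀ i j : ℕ, 0 < i → 0 < j → i ≠ j → f^[i] '' I ∩ f^[j] '' I = ∅) ∧
  ¬ ∃ p : ℝ, IsPerPt f p ∧ ∀ x ∈ I, omegaLim f x = fwdOrbit f p

def HasWanderingInterval (f : ℝ → ℝ) : Prop :=
  ∃ a b : ℝ, a < b ∧ Ioo a b ⊆ Icc 0 1 ∧ IsWanderingInterval f (Ioo a b)

/-- Nice interval `(a,b) ∋ c`: the forward orbits of the endpoints avoid `(a,b)`. -/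
def IsNiceInterval (f : ℝ → ℝ) (c a b : ℝ) : Prop :=
  a < c ∧ c < b ∧ (∀ n : ℕ, f^[n] a ∉ Ioo a b) ∧ ∀ n : ℕ, f^[n] b ∉ Ioo a b

/-- Renormalization interval `(a,b) ∋ c`. -/
def IsRenormInterval (f : ℝ → ℝ) (c a b : ℝ) : Prop :=
  a < c ∧ c < b ∧ IsPerPt f a ∧ IsPerPt f b ∧
  f^[minimalPeriod f a] '' Ico a c ⊆ Icc a b ∧
  f^[minimalPeriod f b] '' Ioc c b ⊆ Icc a b ∧
  (∀ n : ℕ, f^[n] a ∉ Ioo a b) ∧ ∀ n : ℕ, f^[n] b ∉ Ioo a b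

/-- Uniformly expanding set. -/
def IsUniformlyExpanding (f : ℝ → ℝ) (Λ : Set ℝ) : Prop :=
  ∃ C > (0:ℝ), ∃ l > (1:ℝ), ∀ x ∈ Λ, ∀ n : ℕ,
    (∀ k < n, f^[k] x ∈ Λ) → C * l ^ n ≤ |deriv (f^[n]) x|

/-- The set of points of `[0,1]` whose forward orbit avoids `J`. -/
def phobicSet (f : ℝ → ℝ) (J : Set ℝ) : Set ℝ :=
  {x ∈ Icc (0:ℝ) 1 | ∀ n : ℕ, f^[n] x ∉ J}

/-- Topological transitivity on a subset. -/
def TransitiveOn (f : ℝ → ℝ) (Λ : Set ℝ) : Prop :=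
  ∀ U V : Set ℝ, IsOpen U → IsOpen V → (U ∩ Λ).Nonempty → (V ∩ Λ).Nonempty →
    ∃ n : ℕ, (f^[n] '' (U ∩ Λ) ∩ V).Nonempty

/-- Cantor set: nonempty, compact, perfect and totally disconnected. -/
def IsCantorSet (s : Set ℝ) : Prop :=
  s.Nonempty ∧ IsCompact s ∧ Perfect s ∧ IsTotallyDisconnected s

/-- Attracting periodic point: a one-sided neighbourhood lies in the exact basin of
its orbit. -/
def IsAttractingPeriodicPt (f : ℝ → ℝ) (p : ℝ) : Prop :=
  IsPerPt f p ∧ ∃ ε > (0:ℝ),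
    Ioo p (p + ε) ⊆ {x | omegaLim f x = fwdOrbit f p} ∨
    Ioo (p - ε) p ⊆ {x | omegaLim f x = fwdOrbit f p}

/-- Non-wandering set of `f` as a map of `[0,1]`. -/
def nonWandering (f : ℝ → ℝ) : Set ℝ :=
  {x | x ∈ Icc (0:ℝ) 1 ∧ ∀ U : Set ℝ, IsOpen U → x ∈ U →
    ∃ n : ℕ, 0 < n ∧ (f^[n] '' (U ∩ Icc (0:ℝ) 1) ∩ U).Nonempty}

/-- First return time to `J`. -/
def returnTime (f : ℝ → ℝ) (J : Set ℝ) (x : ℝ) : ℕ :=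
  sInf {j : ℕ | 1 ≤ j ∧ f^[j] x ∈ J}

/-- Domain of the first return map to `J`. -/
def returnDomain (f : ℝ → ℝ) (J : Set ℝ) : Set ℝ :=
  {x ∈ J | ∃ j : ℕ, 1 ≤ j ∧ f^[j] x ∈ J}

/-- Linked open intervals. -/
def AreLinked (a₀ b₀ a₁ b₁ : ℝ) : Prop :=
  (({a₀, b₀} : Set ℝ) ∩ Ioo a₁ b₁).Nonempty ∧
  (Ioo a₀ b₀ ∩ ({a₁, b₁} : Set ℝ)).Nonempty


section HomtervalHelpers

private lemma omegaLim_shift (f : ℝ → ℝ) (u : ℝ) (i : ℕ) :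
    omegaLim f (f^[i] u) = omegaLim f u := by
  ext L
  constructor
  · rintro ⟨φ, hφ, hT⟩
    refine ⟨fun n => φ n + i, fun x y h => by simpa using hφ h, ?_⟩
    convert hT using 2 with n
    rw [Function.iterate_add_apply]
  · rintro ⟨φ, hφ, hT⟩
    refine ⟨fun n => φ (n + i) - i, ?_, ?_⟩
    · intro x y h
      have h1 : i ≤ φ (x + i) := le_trans (Nat.le_add_left i x) hφ.le_apply
      have h2 : φ (x + i) < φ (y + i) := hφ (by omega)
      show φ (x + i) - i < φ (y + i) - i
      omega
    · have key : ∀ n, f^[φ (n + i) - i] (f^[i] u) = f^[φ (n + i)] u := by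
        intro n
        rw [← Function.iterate_add_apply]
        congr 1
        have h1 : i ≤ φ (n + i) := le_trans (Nat.le_add_left i n) hφ.le_apply
        omega
      have h5 : Tendsto (fun n => f^[φ (n + i)] u) atTop (𝓝 L) :=
        hT.comp (tendsto_add_atTop_nat i)
      simpa only [key] using h5

private lemma fwdOrbit_finite (f : ℝ → ℝ) (p : ℝ) (n : ℕ) (hn : 0 < n)
    (hp : f^[n] p = p) : (fwdOrbit f p).Finite := by
  apply Set.Finite.subset (Set.Finite.image (fun k => f^[k] p) (Set.finite_Iio n))
  rintro y ⟨k, rfl⟩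
  refine ⟨k % n, Nat.mod_lt _ hn, ?_⟩
  conv_rhs => rw [← Nat.mod_add_div k n]
  rw [Function.iterate_add_apply, Function.iterate_mul, Function.iterate_fixed hp]

private lemma iter_pack {f : ℝ → ℝ} {c : ℝ} (hL : IsLorenzMap 2 f c)
    (T : Set ℝ) (hT : T ⊆ Icc 0 1) (hpre : IsPreconnected T) :
    ∀ n : ℕ, (∀ k, k < n → c ∉ f^[k] '' T) →
      f^[n] '' T ⊆ Icc (0:ℝ) 1 ∧ IsPreconnected (f^[n] '' T) ∧
      ContinuousOn (f^[n]) T ∧ StrictMonoOn (f^[n]) T := by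
  intro n
  induction n with
  | zero =>
    intro _
    simp only [Function.iterate_zero, Set.image_id]
    exact ⟨hT, hpre, continuousOn_id, fun x _ y _ h => h⟩
  | succ n IH =>
    intro h
    obtain ⟨h1, h2, h3, h4⟩ := IH fun k hk => h k (Nat.lt_succ_of_lt hk)
    have hU : f^[n] '' T ⊆ Icc 0 1 \ {c} := fun x hx =>
      ⟨h1 hx, fun hxc => h n (Nat.lt_succ_self n) (by rwa [← (mem_singleton_iff.1 hxc)])⟩
    have hfc : ContinuousOn f (f^[n] '' T) := hL.smooth.continuousOn.mono hU
    have hfm : StrictMonoOn f (f^[n] '' T) :=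
      strictMonoOn_of_deriv_pos (convex_iff_ordConnected.2 h2.ordConnected) hfc
        fun x hx => hL.deriv_pos x (hU (interior_subset hx))
    have himg : f^[n+1] '' T = f '' (f^[n] '' T) := by
      rw [Function.iterate_succ', Set.image_comp]
    refine ⟨?_, ?_, ?_, ?_⟩
    · rw [himg]
      rintro y ⟨x, hx, rfl⟩
      exact hL.mapsTo (hU hx)
    · rw [himg]; exact h2.image f hfc
    · rw [Function.iterate_succ']
      exact hfc.comp h3 (Set.mapsTo_image _ _)
    · rw [Function.iterate_succ']
      exact hfm.comp h4 (Set.mapsTo_image _ _)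

private lemma exists_lim (u : ℕ → ℝ) (h : Monotone u ∨ Antitone u)
    (hb : ∀ n, u n ∈ Icc (0:ℝ) 1) : ∃ L, Tendsto u atTop (𝓝 L) := by
  rcases h with h | h
  · rcases tendsto_of_monotone h with h' | h'
    · exfalso
      obtain ⟨n, hn⟩ := (h'.eventually (eventually_gt_atTop 1)).exists
      exact absurd (hb n).2 (not_le.2 hn)
    · exact h'
  · rcases tendsto_of_antitone h with h' | h'
    · exfalso
      obtain ⟨n, hn⟩ := (h'.eventually (eventually_lt_atBot 0)).exists
      exact absurd (hb n).1 (not_le.2 hn)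
    · exact h'

private lemma mem_uIcc_image {F : ℝ → ℝ} {V : Set ℝ} (hm : StrictMonoOn F V)
    (hV : OrdConnected V) {x y w : ℝ} (hx : x ∈ V) (hy : y ∈ V) (hw : w ∈ uIcc x y) :
    F w ∈ uIcc (F x) (F y) := by
  have hwV : w ∈ V := hV.uIcc_subset hx hy hw
  rcases Set.mem_uIcc.1 hw with ⟨h1, h2⟩ | ⟨h1, h2⟩
  · exact Set.mem_uIcc.2 (Or.inl ⟨hm.monotoneOn hx hwV h1, hm.monotoneOn hwV hy h2⟩)
  · exact Set.mem_uIcc.2 (Or.inr ⟨hm.monotoneOn hy hwV h1, hm.monotoneOn hwV hx h2⟩)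

private lemma step_mem (f : ℝ → ℝ) (I : Set ℝ) (i m n : ℕ) {z : ℝ}
    (hz : z ∈ f^[n*m+i] '' I) : f^[m] z ∈ f^[(n+1)*m+i] '' I := by
  obtain ⟨u, hu, rfl⟩ := hz
  exact ⟨u, hu, by rw [← Function.iterate_add_apply]; congr 1; ring⟩

private lemma iter_mem (f : ℝ → ℝ) (I : Set ℝ) (i m n : ℕ) {z : ℝ}
    (hz : z ∈ f^[n*m+i] '' I) : ∀ k, (f^[m])^[k] z ∈ f^[(n+k)*m+i] '' I := by
  intro k
  induction k with
  | zero => simpa using hz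
  | succ k IH =>
    rw [Function.iterate_succ_apply']
    have h := step_mem f I i m (n+k) IH
    convert h using 3
    ring


private lemma img_iter (f : ℝ → ℝ) (I : Set ℝ) (s k : ℕ) :
    f^[s] '' (f^[k] '' I) = f^[s + k] '' I := by
  rw [Set.image_image]
  exact Set.image_congr fun x _ => (Function.iterate_add_apply f s k x).symm

private lemma core3 {f : ℝ → ℝ} {c : ℝ} (hL : IsLorenzMap 2 f c)
    (m : ℕ) (hm : 0 < m) (p q : ℝ) (hpq : p < q)
    (hfix : ∀ t ∈ Icc p q, f^[m] t = t)
    (hc : ∀ s : ℕ, c ∉ f^[s] '' Icc p q)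
    (hsub' : ∀ s : ℕ, f^[s] '' Icc p q ⊆ Icc (0:ℝ) 1) :
    ∃ p', IsWeakRepeller f p' := by
  classical
  have hp0 : (0:ℝ) ≤ p := by
    have := hsub' 0 (mem_image_of_mem _ (left_mem_Icc.2 hpq.le))
    simpa using this.1
  have hq1 : q ≤ 1 := by
    have := hsub' 0 (mem_image_of_mem _ (right_mem_Icc.2 hpq.le))
    simpa using this.2
  by_cases hex : ∃ t ∈ Ioo p q, ∀ Λ, IsPeriodicAttractor f Λ → t ∉ Λ
  · obtain ⟨t, ht, hΛ⟩ := hex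
    have htmem : t ∈ Icc p q := Ioo_subset_Icc_self ht
    have hfixt : f^[m] t = t := hfix t htmem
    have hfixk : ∀ k, f^[m*k] t = t := fun k => by
      rw [Function.iterate_mul]; exact Function.iterate_fixed hfixt k
    have horb : ∀ r : ℕ, f^[r] t ∈ Ioo (0:ℝ) 1 ∧ f^[r] t ≠ c := by
      intro r
      have h1 : f^[r] t ∈ Icc (0:ℝ) 1 := hsub' r (mem_image_of_mem _ htmem)
      have h2 : f^[r] t ≠ c := fun h => hc r ⟨t, htmem, h⟩
      have hrm : r ≤ m * r := Nat.le_mul_of_pos_left r hm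
      have h0 : f^[r] t ≠ 0 := by
        intro h0
        have ht0 : t = 0 := by
          have := hfixk r
          rw [show m*r = (m*r - r) + r by omega, Function.iterate_add_apply, h0,
            Function.iterate_fixed hL.map_zero] at this
          exact this.symm
        have : (0:ℝ) < t := lt_of_le_of_lt hp0 ht.1
        linarith [this]
      have h1' : f^[r] t ≠ 1 := by
        intro h0
        have ht1 : t = 1 := by
          have := hfixk r
          rw [show m*r = (m*r - r) + r by omega, Function.iterate_add_apply, h0,
            Function.iterate_fixed hL.map_one] at this
          exact this.symm
        have : t < 1 := lt_of_lt_of_le ht.2 hq1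
        linarith [this]
      exact ⟨⟨lt_of_le_of_ne h1.1 (Ne.symm h0), lt_of_le_of_ne h1.2 h1'⟩, h2⟩
    have hdiff : ∀ r : ℕ, DifferentiableAt ℝ f (f^[r] t) := by
      intro r
      have hopen : IsOpen (Ioo (0:ℝ) 1 \ {c}) := isOpen_Ioo.sdiff isClosed_singleton
      have hmem : f^[r] t ∈ Ioo (0:ℝ) 1 \ {c} := ⟨(horb r).1, (horb r).2⟩
      have hsubset : Ioo (0:ℝ) 1 \ {c} ⊆ Icc 0 1 \ {c} := fun x hx =>
        ⟨Ioo_subset_Icc_self hx.1, hx.2⟩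
      have hD : DifferentiableOn ℝ f (Ioo (0:ℝ) 1 \ {c}) :=
        (hL.smooth.mono hsubset).differentiableOn (by norm_num)
      exact hD.differentiableAt (hopen.mem_nhds hmem)
    have hiter : ∀ k : ℕ,
        HasDerivAt (f^[k]) (∏ s ∈ Finset.range k, deriv f (f^[s] t)) t := by
      intro k
      induction k with
      | zero => simpa using hasDerivAt_id t
      | succ k IH =>
        rw [Function.iterate_succ']
        have hf : HasDerivAt f (deriv f (f^[k] t)) (f^[k] t) := (hdiff k).hasDerivAt
        have hcomp := hf.comp t IH
        rw [Finset.prod_range_succ]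
        rw [mul_comm]
        exact hcomp
    have hQper : Function.IsPeriodicPt f (minimalPeriod f t) t :=
      Function.isPeriodicPt_minimalPeriod f t
    have hmper : Function.IsPeriodicPt f m t := hfixt
    have hQpos : 0 < minimalPeriod f t := hmper.minimalPeriod_pos hm
    have hQdvd : minimalPeriod f t ∣ m := hmper.minimalPeriod_dvd
    set s := m / minimalPeriod f t with hs
    have hspos : 0 < s := Nat.div_pos (Nat.le_of_dvd hm hQdvd) hQpos
    have hQs : minimalPeriod f t * s = m := Nat.mul_div_cancel' hQdvd
    set D := ∏ r ∈ Finset.range (minimalPeriod f t), deriv f (f^[r] t) with hD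
    have hDd : HasDerivAt (f^[minimalPeriod f t]) D t := hiter _
    have hQt : f^[minimalPeriod f t] t = t := hQper
    have hDs : HasDerivAt (f^[m]) (D ^ s) t := by
      have h := HasDerivAt.iterate t hDd hQt s
      rwa [← Function.iterate_mul, hQs] at h
    have hderiv1 : deriv (f^[m]) t = 1 := by
      have hev : f^[m] =ᶠ[𝓝 t] id := by
        filter_upwards [Ioo_mem_nhds ht.1 ht.2] with x hx
        exact hfix x (Ioo_subset_Icc_self hx)
      rw [hev.deriv_eq]
      exact deriv_id t
    have hDs1 : D ^ s = 1 := by rw [← hDs.deriv]; exact hderiv1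
    have habsD : |D| = 1 := by
      have h1 : |D| ^ s = 1 := by rw [← abs_pow, hDs1, abs_one]
      rcases lt_trichotomy |D| 1 with h | h | h
      · exfalso
        have := pow_lt_one₀ (abs_nonneg D) h hspos.ne'
        linarith [h1, this]
      · exact h
      · exfalso
        have := one_lt_pow₀ h hspos.ne'
        linarith [h1, this]
    refine ⟨t, ⟨m, hm, hfixt⟩, ?_, hΛ⟩
    rw [hDd.deriv]
    exact habsD
  · exfalso
    push_neg at hex
    have hchoice : ∀ t ∈ Ioo p q, ∃ ρ : ℚ,
        t ∈ omegaLim f (ρ:ℝ) ∧ (omegaLim f (ρ:ℝ)).Finite := by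
      intro t ht
      obtain ⟨Λ, hΛ, htΛ⟩ := hex t ht
      obtain ⟨x, hx⟩ := hΛ.2
      obtain ⟨ε, hε, hball⟩ := Metric.isOpen_iff.1 isOpen_interior x hx
      obtain ⟨ρ, hρ1, hρ2⟩ := exists_rat_btwn (show x - ε < x + ε by linarith)
      have hρmem : (ρ:ℝ) ∈ interior {x | omegaLim f x = Λ} := by
        apply hball
        rw [Real.ball_eq_Ioo]
        exact ⟨hρ1, hρ2⟩
      have hρb : (ρ:ℝ) ∈ {x : ℝ | omegaLim f x = Λ} := interior_subset hρmem
      have h5 : omegaLim f (ρ:ℝ) = Λ := hρb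
      exact ⟨ρ, by rw [h5]; exact htΛ, by rw [h5]; exact hΛ.1⟩
    have hcnt : (Ioo p q).Countable := by
      have hsub2 : Ioo p q ⊆
          ⋃ ρ : ℚ, {t | t ∈ omegaLim f (ρ:ℝ) ∧ (omegaLim f (ρ:ℝ)).Finite} := by
        intro t ht
        obtain ⟨ρ, h1, h2⟩ := hchoice t ht
        exact mem_iUnion.2 ⟨ρ, h1, h2⟩
      refine Set.Countable.mono hsub2 (Set.countable_iUnion fun ρ => ?_)
      by_cases hf : (omegaLim f (ρ:ℝ)).Finite
      · exact Set.Countable.mono (fun t ht => ht.1) hf.countable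
      · have : {t | t ∈ omegaLim f (ρ:ℝ) ∧ (omegaLim f (ρ:ℝ)).Finite} = ∅ :=
          eq_empty_of_forall_notMem fun t ht => hf ht.2
        rw [this]
        exact countable_empty
    have hz := hcnt.measure_zero volume
    rw [Real.volume_Ioo, ENNReal.ofReal_eq_zero] at hz
    linarith

private lemma core2 {f : ℝ → ℝ} {c a b : ℝ} (hL : IsLorenzMap 2 f c)
    (hsub : Ioo a b ⊆ Icc (0:ℝ) 1)
    (hP : ∀ n : ℕ, c ∉ f^[n] '' Ioo a b) (i m : ℕ) (hm : 0 < m) (w : ℝ)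
    (hw : w ∈ f^[i] '' Ioo a b) (hgw : f^[m] w ≠ w)
    (hne : ∀ n : ℕ, (f^[n*m + i] '' Ioo a b ∩ f^[(n+1)*m + i] '' Ioo a b).Nonempty) :
    ∃ Λ : Set ℝ, IsPeriodicAttractor f Λ ∧
      ({x | omegaLim f x = Λ} ∩ Ioo a b).Nonempty := by
  classical
  set I := Ioo a b with hIdef
  have hIpre : IsPreconnected I := isPreconnected_Ioo
  have pack : ∀ T : Set ℝ, T ⊆ Icc 0 1 → IsPreconnected T → (∀ s : ℕ, c ∉ f^[s] '' T) →
      ∀ r : ℕ, f^[r] '' T ⊆ Icc (0:ℝ) 1 ∧ IsPreconnected (f^[r] '' T) ∧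
        ContinuousOn (f^[r]) T ∧ StrictMonoOn (f^[r]) T :=
    fun T h1 h2 h3 r => iter_pack hL T h1 h2 r fun k _ => h3 k
  have himg : ∀ s k : ℕ, f^[s] '' (f^[k] '' I) = f^[s + k] '' I := by
    intro s k
    rw [Set.image_image]
    exact Set.image_congr fun x _ => (Function.iterate_add_apply f s k x).symm
  set J : ℕ → Set ℝ := fun n => f^[n*m + i] '' I with hJdef
  have hJc : ∀ n s : ℕ, c ∉ f^[s] '' J n := by
    intro n s
    show c ∉ f^[s] '' (f^[n*m+i] '' I)
    rw [himg]
    exact hP _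
  have hIpack := pack I hsub hIpre hP
  have hJsub : ∀ n, J n ⊆ Icc (0:ℝ) 1 := fun n => (hIpack _).1
  have hJpre : ∀ n, IsPreconnected (J n) := fun n => (hIpack _).2.1
  set V : ℕ → Set ℝ := fun n => J n ∪ J (n+1) with hVdef
  have hVsub : ∀ n, V n ⊆ Icc (0:ℝ) 1 := fun n => union_subset (hJsub n) (hJsub (n+1))
  have hVpre : ∀ n, IsPreconnected (V n) := by
    intro n
    obtain ⟨z, hz1, hz2⟩ := hne n
    exact (hJpre n).union z hz1 hz2 (hJpre (n+1))
  have hVc : ∀ n s : ℕ, c ∉ f^[s] '' V n := by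
    intro n s hcs
    rw [show V n = J n ∪ J (n+1) from rfl, Set.image_union] at hcs
    rcases hcs with h | h
    · exact hJc n s h
    · exact hJc (n+1) s h
  have hVpack := fun n => pack (V n) (hVsub n) (hVpre n) (hVc n)
  have hVord : ∀ n, OrdConnected (V n) := fun n => (hVpre n).ordConnected
  set x : ℕ → ℝ := fun n => (f^[m])^[n] w with hxdef
  have hx0 : x 0 = w := rfl
  have hxsucc : ∀ n, x (n+1) = f^[m] (x n) := fun n => Function.iterate_succ_apply' _ _ _
  have hw0 : w ∈ J 0 := by
    show w ∈ f^[0*m+i] '' I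
    simpa using hw
  have hxJ : ∀ n, x n ∈ J n := by
    intro n
    have := iter_mem f I i m 0 hw0 n
    rw [zero_add] at this; exact this
  have hxV : ∀ n, x n ∈ V n := fun n => Or.inl (hxJ n)
  have hxV' : ∀ n, x (n+1) ∈ V n := fun n => Or.inr (hxJ (n+1))
  have hmono : ∀ n, StrictMonoOn (f^[m]) (V n) := fun n => (hVpack n m).2.2.2
  have hstep : ∀ n, (x n < x (n+1) → x (n+1) < x (n+2)) ∧
      (x (n+1) < x n → x (n+2) < x (n+1)) := by
    intro n
    constructor
    · intro h
      have := hmono n (hxV n) (hxV' n) h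
      rwa [← hxsucc n, ← hxsucc (n+1)] at this
    · intro h
      have := hmono n (hxV' n) (hxV n) h
      rwa [← hxsucc n, ← hxsucc (n+1)] at this
  have hgw' : x 1 ≠ x 0 := by
    rw [hx0, hxsucc 0, hx0]
    exact hgw
  have hdir : StrictMono x ∨ StrictAnti x := by
    rcases hgw'.lt_or_gt with hlt | hlt
    · right
      apply strictAnti_nat_of_succ_lt
      intro n
      induction n with
      | zero => exact hlt
      | succ n IH => exact (hstep n).2 IH
    · left
      apply strictMono_nat_of_lt_succ
      intro n
      induction n with
      | zero => exact hlt
      | succ n IH => exact (hstep n).1 IH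
  have hrmono : ∀ r : ℕ, (Monotone fun n => f^[r] (x n)) ∨ (Antitone fun n => f^[r] (x n)) := by
    intro r
    have key : ∀ n, StrictMonoOn (f^[r]) (V n) := fun n => (hVpack n r).2.2.2
    rcases hdir with hd | hd
    · left
      apply monotone_nat_of_le_succ
      intro n
      exact (key n (hxV n) (hxV' n) (hd (Nat.lt_succ_self n))).le
    · right
      apply antitone_nat_of_succ_le
      intro n
      exact (key n (hxV' n) (hxV n) (hd (Nat.lt_succ_self n))).le
  have hrbdd : ∀ r n : ℕ, f^[r] (x n) ∈ Icc (0:ℝ) 1 := fun r n =>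
    (hVpack n r).1 (mem_image_of_mem _ (hxV n))
  have hylim : ∀ r : ℕ, ∃ L, Tendsto (fun n => f^[r] (x n)) atTop (𝓝 L) := fun r =>
    exists_lim _ (hrmono r) (hrbdd r)
  choose y hy using hylim
  have horbit : ∀ w', w' ∈ uIcc (x 0) (x 1) →
      ∀ k, (f^[m])^[k] w' ∈ uIcc (x k) (x (k+1)) := by
    intro w' hw' k
    induction k with
    | zero => simpa using hw'
    | succ k IH =>
      have h1 : f^[m] ((f^[m])^[k] w') ∈ uIcc (f^[m] (x k)) (f^[m] (x (k+1))) :=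
        mem_uIcc_image (hmono k) (hVord k) (hxV k) (hxV' k) IH
      rw [Function.iterate_succ_apply']
      rwa [← hxsucc k, ← hxsucc (k+1)] at h1
  have hsq : ∀ w', w' ∈ uIcc (x 0) (x 1) → ∀ r k : ℕ,
      f^[m*k + r] w' ∈ uIcc (f^[r] (x k)) (f^[r] (x (k+1))) := by
    intro w' hw' r k
    have h1 : f^[r] ((f^[m])^[k] w') ∈ uIcc (f^[r] (x k)) (f^[r] (x (k+1))) :=
      mem_uIcc_image ((hVpack k r).2.2.2) (hVord k) (hxV k) (hxV' k) (horbit w' hw' k)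
    rw [show m*k + r = r + m*k by ring, Function.iterate_add_apply, Function.iterate_mul]
    exact h1
  have hconv : ∀ w', w' ∈ uIcc (x 0) (x 1) → ∀ r : ℕ,
      Tendsto (fun k => f^[m*k + r] w') atTop (𝓝 (y r)) := by
    intro w' hw' r
    have hy1 : Tendsto (fun k => f^[r] (x (k+1))) atTop (𝓝 (y r)) :=
      (hy r).comp (tendsto_add_atTop_nat 1)
    have hmin : Tendsto (fun k => min (f^[r] (x k)) (f^[r] (x (k+1)))) atTop (𝓝 (y r)) := by
      simpa using (hy r).min hy1
    have hmax : Tendsto (fun k => max (f^[r] (x k)) (f^[r] (x (k+1)))) atTop (𝓝 (y r)) := by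
      simpa using (hy r).max hy1
    apply tendsto_of_tendsto_of_tendsto_of_le_of_le hmin hmax
    · intro k
      rcases Set.mem_uIcc.1 (hsq w' hw' r k) with ⟨h1, _⟩ | ⟨h1, _⟩
      · exact le_trans (min_le_left _ _) h1
      · exact le_trans (min_le_right _ _) h1
    · intro k
      rcases Set.mem_uIcc.1 (hsq w' hw' r k) with ⟨_, h2⟩ | ⟨_, h2⟩
      · exact le_trans h2 (le_max_right _ _)
      · exact le_trans h2 (le_max_left _ _)
  set Λ : Set ℝ := y '' (Iio m) with hΛdef
  have hΛfin : Λ.Finite := (Set.finite_Iio m).image y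
  have hbasin : ∀ w', w' ∈ uIcc (x 0) (x 1) → omegaLim f w' = Λ := by
    intro w' hw'
    apply Set.eq_of_subset_of_subset
    · rintro L ⟨φ, hφ, hT⟩
      have hinf : ∃ r, r < m ∧ {n | φ n % m = r}.Infinite := by
        by_contra hcon
        push_neg at hcon
        have hall : (Set.univ : Set ℕ) ⊆ ⋃ r ∈ Iio m, {n | φ n % m = r} := by
          intro n _
          exact mem_biUnion (Nat.mod_lt _ hm) rfl
        have hfin : (Set.univ : Set ℕ).Finite :=
          Set.Finite.subset (Set.Finite.biUnion (Set.finite_Iio m)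
            fun r hr => hcon r hr) hall
        exact Set.infinite_univ hfin
      obtain ⟨r, hrm, hrinf⟩ := hinf
      set ψ := Nat.nth (fun n => φ n % m = r) with hψdef
      have hψmono : StrictMono ψ := Nat.nth_strictMono hrinf
      have hψmem : ∀ n, φ (ψ n) % m = r := fun n => Nat.nth_mem_of_infinite hrinf n
      have hk : Tendsto (fun n => φ (ψ n) / m) atTop atTop := by
        apply Filter.tendsto_atTop_atTop.2
        intro B
        refine ⟨B * m, fun n hn => ?_⟩
        have h1 : B * m ≤ φ (ψ n) := le_trans hn (le_trans hψmono.le_apply hφ.le_apply)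
        exact (Nat.le_div_iff_mul_le hm).2 h1
      have h2 : Tendsto (fun n => f^[m * (φ (ψ n) / m) + r] w') atTop (𝓝 (y r)) :=
        (hconv w' hw' r).comp hk
      have h3 : ∀ n, m * (φ (ψ n) / m) + r = φ (ψ n) := fun n => by
        conv_rhs => rw [← Nat.div_add_mod (φ (ψ n)) m]
        rw [hψmem n]
      have h4 : Tendsto (fun n => f^[φ (ψ n)] w') atTop (𝓝 (y r)) := by
        simpa only [h3] using h2
      have h5 : Tendsto (fun n => f^[φ (ψ n)] w') atTop (𝓝 L) :=
        hT.comp hψmono.tendsto_atTop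
      exact ⟨r, hrm, tendsto_nhds_unique h4 h5⟩
    · rintro L ⟨r, hrm, rfl⟩
      refine ⟨fun n => m * n + r, ?_, ?_⟩
      · apply strictMono_nat_of_lt_succ
        intro n
        have : m * n < m * (n + 1) := Nat.mul_lt_mul_of_pos_left (Nat.lt_succ_self n) hm
        omega
      · exact hconv w' hw' r
  have hx01 : x 0 ≠ x 1 := hgw'.symm
  refine ⟨Λ, ⟨hΛfin, ?_⟩, ?_⟩
  · have hIoo : Ioo (min (x 0) (x 1)) (max (x 0) (x 1)) ⊆ {x' | omegaLim f x' = Λ} := by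
      intro t ht
      apply hbasin t
      apply Set.mem_uIcc.2
      rcases le_total (x 0) (x 1) with h | h
      · rw [min_eq_left h, max_eq_right h] at ht
        exact Or.inl ⟨ht.1.le, ht.2.le⟩
      · rw [min_eq_right h, max_eq_left h] at ht
        exact Or.inr ⟨ht.1.le, ht.2.le⟩
    have hne' : (Ioo (min (x 0) (x 1)) (max (x 0) (x 1))).Nonempty :=
      nonempty_Ioo.2 (min_lt_max.2 hx01)
    obtain ⟨t, ht⟩ := hne'
    exact ⟨t, (isOpen_Ioo.subset_interior_iff.2 hIoo) ht⟩
  · obtain ⟨u, hu, huw⟩ := hw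
    have h1 : omegaLim f w = Λ := hbasin w (by rw [hx0]; exact left_mem_uIcc)
    refine ⟨u, ?_, hu⟩
    show omegaLim f u = Λ
    rw [← omegaLim_shift f u i, huw]
    exact h1

end HomtervalHelpers

/-- **Homterval lemma.** For any open interval `I ⊆ [0,1]`, either
some iterate of `f` is a homeomorphism on `I` whose image contains `c`, or `I` is a
wandering interval, or the exact basin of some periodic attractor meets `I`, or `f`
has a weak repeller. -/
theorem lorenz_homterval_lemma (f : ℝ → ℝ) (c a b : ℝ)
    (hL : IsLorenzMap 2 f c) (hC : IsContractingAt f c)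
    (hab : a < b) (hsub : Ioo a b ⊆ Icc (0:ℝ) 1) :
    (∃ n : ℕ, ContinuousOn (f^[n]) (Ioo a b) ∧ InjOn (f^[n]) (Ioo a b) ∧
        c ∈ f^[n] '' Ioo a b) ∨
    IsWanderingInterval f (Ioo a b) ∨
    (∃ Λ : Set ℝ, IsPeriodicAttractor f Λ ∧
        ({x | omegaLim f x = Λ} ∩ Ioo a b).Nonempty) ∨
    (∃ p : ℝ, IsWeakRepeller f p) := by
  classical
  set I := Ioo a b with hIdef
  have hIpre : IsPreconnected I := isPreconnected_Ioo
  have hmid : (a+b)/2 ∈ I := ⟨by linarith, by linarith⟩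
  by_cases hPex : ∃ n : ℕ, c ∈ f^[n] '' I
  · left
    obtain ⟨_, _, h3, h4⟩ := iter_pack hL I hsub hIpre (Nat.find hPex)
      fun k hk => Nat.find_min hPex hk
    exact ⟨Nat.find hPex, h3, h4.injOn, Nat.find_spec hPex⟩
  push_neg at hPex
  by_cases hW : IsWanderingInterval f I
  · exact Or.inr (Or.inl hW)
  right; right
  rw [IsWanderingInterval] at hW
  rcases not_and_or.1 hW with hA | hB
  · -- images overlap
    push_neg at hA
    obtain ⟨i0, j0, hi0, hj0, hij, hne0⟩ := hA
    have hne0' := hne0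
    obtain ⟨i, m, hm, hover⟩ : ∃ i m : ℕ, 0 < m ∧
        (f^[i] '' I ∩ f^[m + i] '' I).Nonempty := by
      rcases hij.lt_or_gt with h | h
      · exact ⟨i0, j0 - i0, by omega, by rwa [show j0 - i0 + i0 = j0 by omega]⟩
      · refine ⟨j0, i0 - j0, by omega, ?_⟩
        rw [show i0 - j0 + j0 = i0 by omega, Set.inter_comm]
        exact hne0'
    obtain ⟨z₀, hz00, hz01⟩ : ∃ z, z ∈ f^[0*m+i] '' I ∧ z ∈ f^[1*m+i] '' I := by
      obtain ⟨z, hz1, hz2⟩ := hover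
      exact ⟨z, by simpa using hz1, by rw [show 1*m+i = m+i by omega]; exact hz2⟩
    have hneJ : ∀ n : ℕ, (f^[n*m + i] '' I ∩ f^[(n+1)*m + i] '' I).Nonempty := by
      intro n
      refine ⟨(f^[m])^[n] z₀, ?_, ?_⟩
      · simpa using iter_mem f I i m 0 hz00 n
      · have h := iter_mem f I i m 1 hz01 n
        rwa [show (1+n)*m+i = (n+1)*m+i by ring] at h
    by_cases hfix : ∀ w ∈ (f^[0*m+i] '' I) ∩ (f^[1*m+i] '' I), f^[m] w = w
    · by_cases hnd : ∃ u v : ℝ, u ∈ (f^[0*m+i] '' I) ∩ (f^[1*m+i] '' I) ∧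
          v ∈ (f^[0*m+i] '' I) ∩ (f^[1*m+i] '' I) ∧ u < v
      · right
        obtain ⟨u, v, hu, hv, huv⟩ := hnd
        have hJ0 := iter_pack hL I hsub hIpre (0*m+i) fun k _ => hPex k
        have hJ1 := iter_pack hL I hsub hIpre (1*m+i) fun k _ => hPex k
        have hDord : OrdConnected ((f^[0*m+i] '' I) ∩ (f^[1*m+i] '' I)) :=
          (hJ0.2.1.ordConnected).inter (hJ1.2.1.ordConnected)
        have hIccD : Icc u v ⊆ (f^[0*m+i] '' I) ∩ (f^[1*m+i] '' I) := hDord.out hu hv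
        have hIccJ0 : Icc u v ⊆ f^[0*m+i] '' I := fun t ht => (hIccD ht).1
        refine core3 hL m hm u v huv (fun t ht => hfix t (hIccD ht)) ?_ ?_
        · intro s hcs
          have h1 : c ∈ f^[s] '' (f^[0*m+i] '' I) := Set.image_mono hIccJ0 hcs
          rw [img_iter] at h1
          exact hPex _ h1
        · intro s
          have h1 : f^[s] '' Icc u v ⊆ f^[s] '' (f^[0*m+i] '' I) :=
            Set.image_mono hIccJ0
          rw [img_iter] at h1
          exact subset_trans h1 (iter_pack hL I hsub hIpre _ fun k _ => hPex k).1
      · -- the intersection is a subsingleton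
        left
        have hns : ∀ u v : ℝ, u ∈ (f^[0*m+i] '' I) ∩ (f^[1*m+i] '' I) →
            v ∈ (f^[0*m+i] '' I) ∩ (f^[1*m+i] '' I) → u = v := by
          intro u v hu hv
          by_contra hne
          rcases (Ne.lt_or_gt hne : u < v ∨ v < u) with h | h
          · exact hnd ⟨u, v, hu, hv, h⟩
          · exact hnd ⟨v, u, hv, hu, h⟩
        have hmono0 : StrictMonoOn (f^[0*m+i]) I :=
          (iter_pack hL I hsub hIpre (0*m+i) fun k _ => hPex k).2.2.2
        have hu1 : a + (b-a)/3 ∈ I := ⟨by linarith, by linarith⟩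
        have hu2 : a + 2*(b-a)/3 ∈ I := ⟨by linarith, by linarith⟩
        have hlt : f^[0*m+i] (a + (b-a)/3) < f^[0*m+i] (a + 2*(b-a)/3) :=
          hmono0 hu1 hu2 (by linarith)
        obtain ⟨w, hwJ0, hwne⟩ : ∃ w, w ∈ f^[0*m+i] '' I ∧ w ≠ z₀ := by
          by_cases h : f^[0*m+i] (a + (b-a)/3) = z₀
          · exact ⟨f^[0*m+i] (a + 2*(b-a)/3), mem_image_of_mem _ hu2, by rw [← h]; exact hlt.ne'⟩
          · exact ⟨f^[0*m+i] (a + (b-a)/3), mem_image_of_mem _ hu1, h⟩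
        have hgw : f^[m] w ≠ w := by
          intro hgw
          have hwJ1 : w ∈ f^[1*m+i] '' I := by
            have := step_mem f I i m 0 hwJ0
            rwa [hgw] at this
          exact hwne (hns w z₀ ⟨hwJ0, hwJ1⟩ ⟨hz00, hz01⟩)
        exact core2 hL hsub hPex i m hm w
          (by rwa [show (0:ℕ)*m+i = i by omega] at hwJ0) hgw hneJ
    · left
      push_neg at hfix
      obtain ⟨w, hwD, hgw⟩ := hfix
      exact core2 hL hsub hPex i m hm w
        (by have := hwD.1; rwa [show (0:ℕ)*m+i = i by omega] at this) hgw hneJ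
  · -- every point of I converges to the orbit of a periodic point
    obtain ⟨p, ⟨n, hn, hp⟩, hbas⟩ := not_not.1 hB
    left
    have hss : I ⊆ {x | omegaLim f x = fwdOrbit f p} := fun x hx => hbas x hx
    exact ⟨fwdOrbit f p, ⟨fwdOrbit_finite f p n hn hp,
      ⟨(a+b)/2, interior_maximal hss isOpen_Ioo hmid⟩⟩, ⟨(a+b)/2, hbas _ hmid, hmid⟩⟩
end
end

section
/- Let f:[0,1]\{c}→[0,1] be a contracting Lorenz map having neither weak repellers nor periodic attractors. If x∈[0,1] is such that c∈α_f(x), then α_f(x) contains the non-wandering set Ω(f). -/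
open Set Filter Topology Function MeasureTheory

noncomputable section

namespace LZ

variable {f : ℝ → ℝ} {c : ℝ}

lemma diffAt (hL : IsLorenzMap 2 f c) {z : ℝ} (hz : z ∈ Icc (0:ℝ) 1 \ {c}) :
    DifferentiableAt ℝ f z := by
  by_contra h
  exact absurd (deriv_zero_of_not_differentiableAt h) (ne_of_gt (hL.deriv_pos z hz))

lemma contAt (hL : IsLorenzMap 2 f c) {z : ℝ} (hz : z ∈ Icc (0:ℝ) 1 \ {c}) :
    ContinuousAt f z := (diffAt hL hz).continuousAt

lemma contOn (hL : IsLorenzMap 2 f c) {A : Set ℝ} (hA : A ⊆ Icc (0:ℝ) 1 \ {c}) :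
    ContinuousOn f A := fun z hz => (contAt hL (hA hz)).continuousWithinAt

lemma memL (hL : IsLorenzMap 2 f c) {z : ℝ} (hz : z ∈ Ico (0:ℝ) c) :
    z ∈ Icc (0:ℝ) 1 \ {c} :=
  ⟨⟨hz.1, le_of_lt (lt_trans hz.2 hL.c_lt_one)⟩, ne_of_lt hz.2⟩

lemma memR (hL : IsLorenzMap 2 f c) {z : ℝ} (hz : z ∈ Ioc c (1:ℝ)) :
    z ∈ Icc (0:ℝ) 1 \ {c} :=
  ⟨⟨le_of_lt (lt_of_le_of_lt (le_of_lt hL.c_pos) hz.1), hz.2⟩, ne_of_gt hz.1⟩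

lemma monoL (hL : IsLorenzMap 2 f c) : StrictMonoOn f (Ico (0:ℝ) c) := by
  apply strictMonoOn_of_deriv_pos (convex_Ico _ _)
  · exact fun z hz => (contAt hL (memL hL hz)).continuousWithinAt
  · intro z hz
    rw [interior_Ico] at hz
    exact hL.deriv_pos z (memL hL ⟨le_of_lt hz.1, hz.2⟩)

lemma monoR (hL : IsLorenzMap 2 f c) : StrictMonoOn f (Ioc c (1:ℝ)) := by
  apply strictMonoOn_of_deriv_pos (convex_Ioc _ _)
  · exact fun z hz => (contAt hL (memR hL hz)).continuousWithinAt
  · intro z hz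
    rw [interior_Ioc] at hz
    exact hL.deriv_pos z (memR hL ⟨hz.1, le_of_lt hz.2⟩)

/-- Connected sets avoiding `c` lie on one side. -/
lemma side {A : Set ℝ} (hpre : IsPreconnected A) (hsub : A ⊆ Icc (0:ℝ) 1 \ {c}) :
    A ⊆ Ico (0:ℝ) c ∨ A ⊆ Ioc c (1:ℝ) := by
  by_cases h : ∃ a ∈ A, c < a
  · obtain ⟨a, ha, hca⟩ := h
    right
    intro t ht
    refine ⟨?_, (hsub ht).1.2⟩
    by_contra hlt
    push_neg at hlt
    have htc : t < c := lt_of_le_of_ne hlt (hsub ht).2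
    exact (hsub (hpre.Icc_subset ht ha ⟨le_of_lt htc, le_of_lt hca⟩)).2 rfl
  · push_neg at h
    left
    exact fun t ht => ⟨(hsub ht).1.1, lt_of_le_of_ne (h t ht) (hsub ht).2⟩

/-- Image of an open set inside a monotonicity domain is open. -/
lemma open_image {D S : Set ℝ} (hD : OrdConnected D)
    (hcont : ∀ z ∈ D, ContinuousAt f z) (hmono : StrictMonoOn f D)
    (hS : IsOpen S) (hsub : S ⊆ D) : IsOpen (f '' S) := by
  rw [isOpen_iff_mem_nhds]
  rintro q ⟨s, hs, rfl⟩
  obtain ⟨δ, hδ, hball⟩ := Metric.isOpen_iff.1 hS s hs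
  have hIcc : Icc (s - δ/2) (s + δ/2) ⊆ S := by
    intro t ht
    apply hball
    rw [Metric.mem_ball, Real.dist_eq, abs_sub_lt_iff]
    constructor <;> [linarith [ht.2]; linarith [ht.1]]
  have hmemD : ∀ t ∈ Icc (s - δ/2) (s + δ/2), t ∈ D := fun t ht => hsub (hIcc ht)
  have h1 : s - δ/2 ∈ D := hmemD _ ⟨le_refl _, by linarith⟩
  have h2 : s + δ/2 ∈ D := hmemD _ ⟨by linarith, le_refl _⟩
  have hsD : s ∈ D := hsub hs
  have hco : ContinuousOn f (Icc (s - δ/2) (s + δ/2)) :=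
    fun t ht => (hcont t (hmemD t ht)).continuousWithinAt
  have hiv := intermediate_value_Icc (by linarith : s - δ/2 ≤ s + δ/2) hco
  have hlt1 : f (s - δ/2) < f s := hmono h1 hsD (by linarith)
  have hlt2 : f s < f (s + δ/2) := hmono hsD h2 (by linarith)
  have himg : Ioo (f (s - δ/2)) (f (s + δ/2)) ⊆ f '' S :=
    fun t ht => (image_mono (f := f) hIcc) (hiv (Ioo_subset_Icc_self ht))
  exact mem_nhds_iff.2 ⟨Ioo (f (s - δ/2)) (f (s + δ/2)), himg, isOpen_Ioo, hlt1, hlt2⟩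

/-- One inductive step for images of nice sets. -/
lemma step_facts (hL : IsLorenzMap 2 f c) {A : Set ℝ}
    (hA : A ⊆ Icc (0:ℝ) 1 \ {c}) (hApre : IsPreconnected A) (hAopen : IsOpen A) :
    f '' A ⊆ Icc (0:ℝ) 1 ∧ IsOpen (f '' A) ∧ IsPreconnected (f '' A) := by
  refine ⟨?_, ?_, hApre.image f (contOn hL hA)⟩
  · rintro q ⟨t, ht, rfl⟩
    exact hL.mapsTo (hA ht)
  · rcases side hApre hA with hs | hs
    · exact open_image Set.ordConnected_Ico
        (fun z hz => contAt hL (memL hL hz)) (monoL hL) hAopen hs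
    · exact open_image Set.ordConnected_Ioc
        (fun z hz => contAt hL (memR hL hz)) (monoR hL) hAopen hs

/-- Exact preimage chains concatenate. -/
lemma concat {x : ℝ} :
    ∀ (k : ℕ) {w zz : ℝ} {m : ℕ}, f^[k] w = zz → zz ∈ extPreimIter f c m x →
      w ∈ extPreimIter f c (k + m) x := by
  intro k
  induction k with
  | zero =>
    intro w zz m h hm
    simp only [Function.iterate_zero, id] at h
    subst h
    simpa using hm
  | succ k ih =>
    intro w zz m h hm
    rw [Function.iterate_succ_apply] at h
    have hfw : f w ∈ extPreimIter f c (k + m) x := ih h hm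
    have : w ∈ extPreimIter f c ((k + m) + 1) x :=
      ⟨f w, hfw, Or.inl rfl⟩
    simpa [Nat.succ_add] using this

end LZ
namespace LZ

variable {f : ℝ → ℝ} {c : ℝ}

/-- If an open set of `T`-fixed points exists around a point with good orbit,
we get a weak repeller: contradiction. -/
lemma weak_repeller_absurd (hL : IsLorenzMap 2 f c)
    (hWR : ∀ p ∈ Icc (0:ℝ) 1, ¬ IsWeakRepeller f p)
    (hPA : ¬ ∃ Λ : Set ℝ, IsPeriodicAttractor f Λ)
    {T : ℕ} (hT : 1 ≤ T) {W : Set ℝ} (hWopen : IsOpen W)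
    {p₀ : ℝ} (hp₀ : p₀ ∈ W)
    (horb : ∀ i : ℕ, f^[i] p₀ ∈ Icc (0:ℝ) 1 \ {c})
    (hfix : ∀ w ∈ W, f^[T] w = w) : False := by
  have hdiff : ∀ m : ℕ, DifferentiableAt ℝ (f^[m]) p₀ ∧ 0 < deriv (f^[m]) p₀ := by
    intro m
    induction m with
    | zero =>
      constructor
      · simpa [Function.iterate_zero] using differentiableAt_id'
      · simp [Function.iterate_zero]
    | succ m ih =>
      have hdf : DifferentiableAt ℝ f (f^[m] p₀) := diffAt hL (horb m)
      constructor
      · rw [Function.iterate_succ']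
        exact hdf.comp p₀ ih.1
      · rw [Function.iterate_succ', deriv_comp p₀ hdf ih.1]
        exact mul_pos (hL.deriv_pos _ (horb m)) ih.2
  have hfixp : f^[T] p₀ = p₀ := hfix p₀ hp₀
  have hperT : Function.IsPeriodicPt f T p₀ := hfixp
  have hper : IsPerPt f p₀ := ⟨T, hT, hfixp⟩
  set m := Function.minimalPeriod f p₀ with hm
  have hdvd : m ∣ T := hperT.minimalPeriod_dvd
  obtain ⟨s, hs⟩ := hdvd
  have hspos : 0 < s := by
    rcases Nat.eq_zero_or_pos s with h | h
    · rw [h, Nat.mul_zero] at hs; omega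
    · exact h
  have hfixm : f^[m] p₀ = p₀ := Function.iterate_minimalPeriod
  have hDT : deriv (f^[T]) p₀ = 1 := by
    have hev : f^[T] =ᶠ[𝓝 p₀] id :=
      Filter.eventually_of_mem (hWopen.mem_nhds hp₀) (fun w hw => hfix w hw)
    rw [hev.deriv_eq]
    simp
  have hpow : ∀ s : ℕ, DifferentiableAt ℝ ((f^[m])^[s]) p₀ ∧
      deriv ((f^[m])^[s]) p₀ = (deriv (f^[m]) p₀) ^ s := by
    intro s
    induction s with
    | zero =>
      constructor
      · simpa [Function.iterate_zero] using differentiableAt_id'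
      · simp [Function.iterate_zero]
    | succ s ih =>
      have hfixs : (f^[m])^[s] p₀ = p₀ := Function.IsFixedPt.iterate hfixm s
      have hdm : DifferentiableAt ℝ (f^[m]) ((f^[m])^[s] p₀) := by
        rw [hfixs]; exact (hdiff m).1
      constructor
      · rw [Function.iterate_succ']
        exact hdm.comp p₀ ih.1
      · rw [Function.iterate_succ', deriv_comp p₀ hdm ih.1, ih.2, hfixs, pow_succ]
        ring
  have hone : (deriv (f^[m]) p₀) ^ s = 1 := by
    rw [← (hpow s).2, ← Function.iterate_mul, ← hs]
    exact hDT
  have hDm : deriv (f^[m]) p₀ = 1 := by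
    have hpos : 0 < deriv (f^[m]) p₀ := (hdiff m).2
    rcases lt_trichotomy (deriv (f^[m]) p₀) 1 with h | h | h
    · have := pow_lt_one₀ (le_of_lt hpos) h (Nat.pos_iff_ne_zero.mp hspos)
      rw [hone] at this; exact absurd this (lt_irrefl 1)
    · exact h
    · have := one_lt_pow₀ h (Nat.pos_iff_ne_zero.mp hspos)
      rw [hone] at this; exact absurd this (lt_irrefl 1)
  have hp01 : p₀ ∈ Icc (0:ℝ) 1 := by
    have := (horb 0).1
    simpa using this
  exact hWR p₀ hp01 ⟨hper, by rw [← hm, hDm]; exact abs_one,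
    fun Λ hΛ => absurd ⟨Λ, hΛ⟩ hPA⟩

end LZ
namespace LZ

variable {f : ℝ → ℝ} {c : ℝ}

/-- Orientation-free squeeze: if the orbit of `y` along arithmetic progressions
is squeezed between converging sequences, its ω-limit set is the finite set of limits. -/
lemma omegaLim_eq_of_squeeze {T : ℕ} (hT : 1 ≤ T) {y : ℝ} {u : ℕ → ℕ → ℝ} {l : ℕ → ℝ}
    (hten : ∀ i, Tendsto (u i) atTop (𝓝 (l i)))
    (hbet : ∀ i j, min (u i j) (u i (j+1)) < f^[i + T*j] y ∧
      f^[i + T*j] y < max (u i j) (u i (j+1))) :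
    omegaLim f y = l '' (Iio T) := by
  have hTpos : 0 < T := hT
  have hten' : ∀ i, Tendsto (fun j => u i (j+1)) atTop (𝓝 (l i)) :=
    fun i => (hten i).comp (tendsto_add_atTop_nat 1)
  apply Set.Subset.antisymm
  · -- omegaLim ⊆ Λ
    rintro q ⟨ψ, hψ, hq⟩
    have hclosed : IsClosed (l '' (Iio T)) := ((Set.finite_Iio T).image l).isClosed
    rw [← hclosed.closure_eq]
    rw [Metric.mem_closure_iff]
    intro ε hε
    have hε3 : 0 < ε/3 := by linarith
    have huni : ∀ i, ∃ J, ∀ j ≥ J, dist (u i j) (l i) < ε/3 :=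
      fun i => Metric.tendsto_atTop.1 (hten i) _ hε3
    choose Js hJs using huni
    set J := (Finset.range T).sup Js with hJ
    obtain ⟨N₁, hN₁⟩ := Metric.tendsto_atTop.1 hq (ε/3) hε3
    set n := max N₁ (T*(J+1)) with hn
    have hn1 : N₁ ≤ n := le_max_left _ _
    have hψn : T*(J+1) ≤ ψ n := le_trans (le_max_right _ _) hψ.le_apply
    set i := ψ n % T with hi
    set j := ψ n / T with hj
    have hiT : i < T := Nat.mod_lt _ hTpos
    have hdec : i + T*j = ψ n := Nat.mod_add_div (ψ n) T
    have hjJ : J + 1 ≤ j := by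
      rw [hj, Nat.le_div_iff_mul_le hTpos, mul_comm]
      exact hψn
    have hJsle : Js i ≤ J := Finset.le_sup (Finset.mem_range.2 hiT)
    have hd1 : dist (u i j) (l i) < ε/3 := hJs i j (by omega)
    have hd2 : dist (u i (j+1)) (l i) < ε/3 := hJs i (j+1) (by omega)
    have hval := hbet i j
    rw [hdec] at hval
    have hdist : dist (f^[ψ n] y) (l i) < ε/3 := by
      rw [Real.dist_eq] at hd1 hd2 ⊢
      rw [abs_lt] at hd1 hd2 ⊢
      have hminle : l i - ε/3 < min (u i j) (u i (j+1)) :=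
        lt_min (by linarith [hd1.1]) (by linarith [hd2.1])
      have hmaxle : max (u i j) (u i (j+1)) < l i + ε/3 :=
        max_lt (by linarith [hd1.2]) (by linarith [hd2.2])
      constructor <;> [linarith [hval.1]; linarith [hval.2]]
    refine ⟨l i, ⟨i, hiT, rfl⟩, ?_⟩
    calc dist q (l i) ≤ dist q (f^[ψ n] y) + dist (f^[ψ n] y) (l i) := dist_triangle _ _ _
    _ < ε/3 + ε/3 := by
        apply add_lt_add _ hdist
        rw [dist_comm]; exact hN₁ n hn1
    _ < ε := by linarith
  · -- Λ ⊆ omegaLim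
    rintro q ⟨i, hiT, rfl⟩
    refine ⟨fun n => i + T*n, ?_, ?_⟩
    · intro a b h
      show i + T*a < i + T*b
      have h2 : T*(a+1) ≤ T*b := Nat.mul_le_mul_left T (Nat.succ_le_of_lt h)
      rw [Nat.mul_succ] at h2
      omega
    · have hlow : Tendsto (fun n => min (u i n) (u i (n+1))) atTop (𝓝 (l i)) := by
        have := ((hten i).min (hten' i))
        simpa using this
      have hhigh : Tendsto (fun n => max (u i n) (u i (n+1))) atTop (𝓝 (l i)) := by
        have := ((hten i).max (hten' i))
        simpa using this
      exact tendsto_of_tendsto_of_tendsto_of_le_of_le hlow hhigh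
        (fun n => le_of_lt (hbet i n).1) (fun n => le_of_lt (hbet i n).2)

end LZ
namespace LZ

variable {f : ℝ → ℝ} {c : ℝ}

lemma orbit_attractor_absurd (hPA : ¬ ∃ Λ : Set ℝ, IsPeriodicAttractor f Λ)
    {T : ℕ} (hT : 1 ≤ T) {W : Set ℝ} (hord : OrdConnected W)
    (hsub : ∀ i : ℕ, ∀ w ∈ W, f^[i] w ∈ Icc (0:ℝ) 1)
    (hmono : ∀ i : ℕ, StrictMonoOn (f^[i]) W)
    (hinv : MapsTo (f^[T]) W W)
    {w₀ : ℝ} (hw₀ : w₀ ∈ W) (hne : f^[T] w₀ ≠ w₀) : False := by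
  set w : ℕ → ℝ := fun j => (f^[T])^[j] w₀ with hw
  have hwW : ∀ j, w j ∈ W := by
    intro j
    induction j with
    | zero => simpa [hw] using hw₀
    | succ j ih =>
      have : w (j+1) = f^[T] (w j) := Function.iterate_succ_apply' _ _ _
      rw [this]
      exact hinv ih
  have hwsucc : ∀ j, w (j+1) = f^[T] (w j) := fun j => Function.iterate_succ_apply' _ _ _
  have hw0 : w 0 = w₀ := rfl
  have hw1 : w 1 = f^[T] w₀ := by rw [hwsucc 0, hw0]
  -- by strict monotonicity the orbit is strictly monotone, in one of two directions
  rcases lt_or_gt_of_ne hne with hlt | hlt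
  · -- decreasing case : f^[T] w₀ < w₀
    have hstep : ∀ j, w (j+1) < w j := by
      intro j
      induction j with
      | zero => rw [hw1, hw0]; exact hlt
      | succ j ih =>
        have h := hmono T (hwW (j+1)) (hwW j) ih
        rw [← hwsucc (j+1), ← hwsucc j] at h
        exact h
    have hwanti : StrictAnti w := strictAnti_nat_of_succ_lt hstep
    set u : ℕ → ℕ → ℝ := fun i j => f^[i] (w j) with hu
    have huanti : ∀ i, StrictAnti (u i) :=
      fun i a b h => hmono i (hwW b) (hwW a) (hwanti h)
    have hbdd : ∀ i, BddBelow (range (u i)) := by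
      intro i
      refine ⟨0, ?_⟩
      rintro _ ⟨j, rfl⟩
      exact (hsub i _ (hwW j)).1
    set l : ℕ → ℝ := fun i => ⨅ j, u i j with hl
    have hten : ∀ i, Tendsto (u i) atTop (𝓝 (l i)) :=
      fun i => tendsto_atTop_ciInf (huanti i).antitone (hbdd i)
    have hbasin : Ioo (w 1) (w 0) ⊆ {y | omegaLim f y = l '' (Iio T)} := by
      intro y hy
      have hIooW : Ioo (w 1) (w 0) ⊆ W :=
        fun t ht => hord.out (hwW 1) (hwW 0) (Ioo_subset_Icc_self ht)
      have horby : ∀ j, (f^[T])^[j] y ∈ W ∧ w (j+1) < (f^[T])^[j] y ∧ (f^[T])^[j] y < w j := by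
        intro j
        induction j with
        | zero =>
          refine ⟨hIooW hy, ?_, ?_⟩ <;> simp [Function.iterate_zero_apply]
          exacts [hy.1, hy.2]
        | succ j ih =>
          have hq : (f^[T])^[j+1] y = f^[T] ((f^[T])^[j] y) :=
            Function.iterate_succ_apply' _ _ _
          refine ⟨by rw [hq]; exact hinv ih.1, ?_, ?_⟩
          · rw [hq, hwsucc (j+1)]
            exact hmono T (hwW (j+1)) ih.1 ih.2.1
          · rw [hq, hwsucc j]
            exact hmono T ih.1 (hwW j) ih.2.2
      have hbet : ∀ i j, min (u i j) (u i (j+1)) < f^[i + T*j] y ∧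
          f^[i + T*j] y < max (u i j) (u i (j+1)) := by
        intro i j
        have hit : f^[i + T*j] y = f^[i] ((f^[T])^[j] y) := by
          rw [Function.iterate_add_apply, Function.iterate_mul]
        have h1 : f^[i] (w (j+1)) < f^[i] ((f^[T])^[j] y) :=
          hmono i (hwW (j+1)) (horby j).1 (horby j).2.1
        have h2 : f^[i] ((f^[T])^[j] y) < f^[i] (w j) :=
          hmono i (horby j).1 (hwW j) (horby j).2.2
        have hmin : min (u i j) (u i (j+1)) = u i (j+1) :=
          min_eq_right (le_of_lt (huanti i (Nat.lt_succ_self j)))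
        have hmax : max (u i j) (u i (j+1)) = u i j :=
          max_eq_left (le_of_lt (huanti i (Nat.lt_succ_self j)))
        rw [hit, hmin, hmax]
        exact ⟨h1, h2⟩
      exact omegaLim_eq_of_squeeze hT hten hbet
    apply hPA
    refine ⟨l '' (Iio T), (Set.finite_Iio T).image l, ?_⟩
    refine ⟨(w 1 + w 0)/2, interior_maximal hbasin isOpen_Ioo ?_⟩
    constructor <;> [skip; skip] <;> [linarith [hstep 0]; linarith [hstep 0]]
  · -- increasing case : w₀ < f^[T] w₀
    have hstep : ∀ j, w j < w (j+1) := by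
      intro j
      induction j with
      | zero => rw [hw1, hw0]; exact hlt
      | succ j ih =>
        have h := hmono T (hwW j) (hwW (j+1)) ih
        rw [← hwsucc (j+1), ← hwsucc j] at h
        exact h
    have hwmono : StrictMono w := strictMono_nat_of_lt_succ hstep
    set u : ℕ → ℕ → ℝ := fun i j => f^[i] (w j) with hu
    have humono : ∀ i, StrictMono (u i) :=
      fun i a b h => hmono i (hwW a) (hwW b) (hwmono h)
    have hbdd : ∀ i, BddAbove (range (u i)) := by
      intro i
      refine ⟨1, ?_⟩
      rintro _ ⟨j, rfl⟩
      exact (hsub i _ (hwW j)).2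
    set l : ℕ → ℝ := fun i => ⨆ j, u i j with hl
    have hten : ∀ i, Tendsto (u i) atTop (𝓝 (l i)) :=
      fun i => tendsto_atTop_ciSup (humono i).monotone (hbdd i)
    have hbasin : Ioo (w 0) (w 1) ⊆ {y | omegaLim f y = l '' (Iio T)} := by
      intro y hy
      have hIooW : Ioo (w 0) (w 1) ⊆ W :=
        fun t ht => hord.out (hwW 0) (hwW 1) (Ioo_subset_Icc_self ht)
      have horby : ∀ j, (f^[T])^[j] y ∈ W ∧ w j < (f^[T])^[j] y ∧ (f^[T])^[j] y < w (j+1) := by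
        intro j
        induction j with
        | zero =>
          refine ⟨hIooW hy, ?_, ?_⟩ <;> simp [Function.iterate_zero_apply]
          exacts [hy.1, hy.2]
        | succ j ih =>
          have hq : (f^[T])^[j+1] y = f^[T] ((f^[T])^[j] y) :=
            Function.iterate_succ_apply' _ _ _
          refine ⟨by rw [hq]; exact hinv ih.1, ?_, ?_⟩
          · rw [hq, hwsucc j]
            exact hmono T (hwW j) ih.1 ih.2.1
          · rw [hq, hwsucc (j+1)]
            exact hmono T ih.1 (hwW (j+1)) ih.2.2
      have hbet : ∀ i j, min (u i j) (u i (j+1)) < f^[i + T*j] y ∧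
          f^[i + T*j] y < max (u i j) (u i (j+1)) := by
        intro i j
        have hit : f^[i + T*j] y = f^[i] ((f^[T])^[j] y) := by
          rw [Function.iterate_add_apply, Function.iterate_mul]
        have h1 : f^[i] (w j) < f^[i] ((f^[T])^[j] y) :=
          hmono i (hwW j) (horby j).1 (horby j).2.1
        have h2 : f^[i] ((f^[T])^[j] y) < f^[i] (w (j+1)) :=
          hmono i (horby j).1 (hwW (j+1)) (horby j).2.2
        have hmin : min (u i j) (u i (j+1)) = u i j :=
          min_eq_left (le_of_lt (humono i (Nat.lt_succ_self j)))
        have hmax : max (u i j) (u i (j+1)) = u i (j+1) :=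
          max_eq_right (le_of_lt (humono i (Nat.lt_succ_self j)))
        rw [hit, hmin, hmax]
        exact ⟨h1, h2⟩
      exact omegaLim_eq_of_squeeze hT hten hbet
    apply hPA
    refine ⟨l '' (Iio T), (Set.finite_Iio T).image l, ?_⟩
    refine ⟨(w 0 + w 1)/2, interior_maximal hbasin isOpen_Ioo ?_⟩
    constructor <;> [skip; skip] <;> [linarith [hstep 0]; linarith [hstep 0]]

end LZ
namespace LZ

variable {f : ℝ → ℝ} {c : ℝ}

lemma no_recur (hL : IsLorenzMap 2 f c)
    (hWR : ∀ p ∈ Icc (0:ℝ) 1, ¬ IsWeakRepeller f p)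
    (hPA : ¬ ∃ Λ : Set ℝ, IsPeriodicAttractor f Λ)
    {S₀ : Set ℝ} (hopen : IsOpen S₀) (hpre : IsPreconnected S₀)
    (hsub01 : S₀ ⊆ Ioo (0:ℝ) 1)
    (havoid : ∀ k : ℕ, c ∉ f^[k] '' S₀)
    {T : ℕ} (hT : 1 ≤ T) {p₀ : ℝ} (hp₀ : p₀ ∈ S₀ ∩ f^[T] '' S₀) : False := by
  classical
  set S : ℕ → Set ℝ := fun k => f^[k] '' S₀ with hS
  have hSdef : ∀ k, S k = f^[k] '' S₀ := fun k => rfl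
  have hS0 : S 0 = S₀ := by rw [hSdef]; simp
  have hSadd : ∀ a b : ℕ, S (a + b) = f^[a] '' S b := by
    intro a b
    rw [hSdef, hSdef, Function.iterate_add, Set.image_comp]
  have hSsucc : ∀ k, S (k+1) = f '' S k := by
    intro k
    have h := hSadd 1 k
    rw [Nat.add_comm 1 k] at h
    simpa [Function.iterate_one] using h
  have hbasic : ∀ k, S k ⊆ Icc (0:ℝ) 1 \ {c} ∧ IsOpen (S k) ∧ IsPreconnected (S k) := by
    intro k
    induction k with
    | zero =>
      refine ⟨?_, by rw [hS0]; exact hopen, by rw [hS0]; exact hpre⟩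
      intro t ht
      rw [hS0] at ht
      refine ⟨Ioo_subset_Icc_self (hsub01 ht), fun he => havoid 0 ?_⟩
      simp only [Function.iterate_zero, Set.image_id]
      exact he ▸ ht
    | succ k ih =>
      obtain ⟨hsubk, hopenk, hprek⟩ := ih
      have h3 := step_facts hL hsubk hprek hopenk
      rw [← hSsucc k] at h3
      exact ⟨fun t ht => ⟨h3.1 ht, fun he => havoid (k+1) (by rw [← hSdef]; exact he ▸ ht)⟩,
        h3.2.1, h3.2.2⟩
  have hp0S : ∀ i, f^[i] p₀ ∈ S i := fun i => ⟨p₀, hp₀.1, rfl⟩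
  set w : ℕ → ℝ := fun j => f^[j*T] p₀ with hwdef
  have hwmem1 : ∀ j, w j ∈ S (j*T) := fun j => ⟨p₀, hp₀.1, rfl⟩
  have hwmem2 : ∀ j, w j ∈ S (j*T + T) := by
    intro j
    rw [hSadd (j*T) T]
    exact ⟨p₀, hp₀.2, rfl⟩
  set W : Set ℝ := ⋃ j : ℕ, S (j*T) with hWdef
  have hWmem : ∀ j, S (j*T) ⊆ W := fun j => subset_iUnion (fun j : ℕ => S (j*T)) j
  have hp₀S0 : p₀ ∈ S (0*T) := by rw [Nat.zero_mul, hS0]; exact hp₀.1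
  have hp₀W : p₀ ∈ W := hWmem 0 hp₀S0
  have hWopen : IsOpen W := isOpen_iUnion (fun j => (hbasic (j*T)).2.1)
  have hWavoid : W ⊆ Icc (0:ℝ) 1 \ {c} := iUnion_subset (fun j => (hbasic (j*T)).1)
  -- preconnectedness of W via chained finite unions
  set V : ℕ → Set ℝ := fun J => Nat.rec (S 0) (fun J VJ => VJ ∪ S ((J+1)*T)) J with hV
  have hV0 : V 0 = S 0 := rfl
  have hVsucc : ∀ J, V (J+1) = V J ∪ S ((J+1)*T) := fun J => rfl
  have hVfacts : ∀ J, IsPreconnected (V J) ∧ V J ⊆ W ∧ ∀ j ≤ J, S (j*T) ⊆ V J := by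
    intro J
    induction J with
    | zero =>
      rw [hV0]
      refine ⟨(hbasic 0).2.2, ?_, ?_⟩
      · rw [← Nat.zero_mul T]; exact hWmem 0
      · intro j hj
        rw [Nat.le_zero.1 hj, Nat.zero_mul]
    | succ J ih =>
      obtain ⟨ihpre, ihW, ihmem⟩ := ih
      have hwJV : w J ∈ V J := ihmem J (le_refl J) (hwmem1 J)
      have hwJS : w J ∈ S ((J+1)*T) := by rw [Nat.succ_mul]; exact hwmem2 J
      refine ⟨?_, ?_, ?_⟩
      · rw [hVsucc]
        exact IsPreconnected.union (w J) hwJV hwJS ihpre (hbasic ((J+1)*T)).2.2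
      · rw [hVsucc]
        exact union_subset ihW (hWmem (J+1))
      · intro j hj
        rw [hVsucc]
        rcases Nat.lt_or_ge j (J+1) with h | h
        · exact (ihmem j (Nat.lt_succ_iff.1 h)).trans subset_union_left
        · have : j = J + 1 := le_antisymm hj h
          rw [this]
          exact subset_union_right
  have hWpre : IsPreconnected W := by
    apply isPreconnected_of_forall p₀
    intro y hy
    obtain ⟨j, hj⟩ := mem_iUnion.1 hy
    exact ⟨V j, (hVfacts j).2.1, (hVfacts j).2.2 0 (Nat.zero_le j) hp₀S0,
      (hVfacts j).2.2 j (le_refl j) hj, (hVfacts j).1⟩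
  -- stage facts
  have hstagesub : ∀ i, f^[i] '' W ⊆ Icc (0:ℝ) 1 \ {c} := by
    intro i
    rw [hWdef, image_iUnion]
    apply iUnion_subset
    intro j
    rw [← hSadd i (j*T)]
    exact (hbasic (i + j*T)).1
  have hcontW : ∀ i, ContinuousOn (f^[i]) W := by
    intro i
    induction i with
    | zero => simpa [Function.iterate_zero] using continuousOn_id
    | succ i ih =>
      rw [Function.iterate_succ']
      exact ContinuousOn.comp (contOn hL (hstagesub i)) ih (mapsTo_image _ _)
  have hstagepre : ∀ i, IsPreconnected (f^[i] '' W) :=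
    fun i => hWpre.image _ (hcontW i)
  have hmonoW : ∀ i, StrictMonoOn (f^[i]) W := by
    intro i
    induction i with
    | zero => intro a _ b _ h; simpa using h
    | succ i ih =>
      intro a ha b hb hab
      have h1 : f^[i] a < f^[i] b := ih ha hb hab
      have hmemA : f^[i] a ∈ f^[i] '' W := mem_image_of_mem _ ha
      have hmemB : f^[i] b ∈ f^[i] '' W := mem_image_of_mem _ hb
      rw [Function.iterate_succ_apply', Function.iterate_succ_apply']
      rcases side (hstagepre i) (hstagesub i) with hs | hs
      · exact monoL hL (hs hmemA) (hs hmemB) h1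
      · exact monoR hL (hs hmemA) (hs hmemB) h1
  have hinvW : MapsTo (f^[T]) W W := by
    intro q hq
    obtain ⟨j, hj⟩ := mem_iUnion.1 hq
    apply hWmem (j+1)
    have himg : f^[T] q ∈ f^[T] '' S (j*T) := mem_image_of_mem _ hj
    rw [← hSadd T (j*T)] at himg
    have he : (j+1)*T = T + j*T := by
      rw [Nat.succ_mul, Nat.add_comm]
    rw [he]
    exact himg
  by_cases hfix : ∀ q ∈ W, f^[T] q = q
  · exact weak_repeller_absurd hL hWR hPA hT hWopen hp₀W
      (fun i => (hbasic i).1 (hp0S i)) hfix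
  · push_neg at hfix
    obtain ⟨w₁, hw₁W, hne⟩ := hfix
    exact orbit_attractor_absurd hPA hT hWpre.ordConnected
      (fun i q hq => (hstagesub i (mem_image_of_mem _ hq)).1) hmonoW hinvW hw₁W hne

end LZ
namespace LZ

variable {f : ℝ → ℝ} {c : ℝ}

lemma reach (hL : IsLorenzMap 2 f c)
    (hWR : ∀ p ∈ Icc (0:ℝ) 1, ¬ IsWeakRepeller f p)
    (hPA : ¬ ∃ Λ : Set ℝ, IsPeriodicAttractor f Λ)
    {x : ℝ} {φ : ℕ → ℕ} {z : ℕ → ℝ} (hφ : StrictMono φ)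
    (hz : ∀ j, z j ∈ extPreimIter f c (φ j) x) (hzc : Tendsto z atTop (𝓝 c))
    {S₀ : Set ℝ} (hopen : IsOpen S₀) (hpre : IsPreconnected S₀)
    (hsub01 : S₀ ⊆ Ioo (0:ℝ) 1)
    (hrec : (∀ k : ℕ, c ∉ f^[k] '' S₀) → ∃ T, 1 ≤ T ∧ (S₀ ∩ f^[T] '' S₀).Nonempty)
    (N : ℕ) : ∃ w ∈ S₀, ∃ n, N ≤ n ∧ w ∈ extPreimIter f c n x := by
  classical
  by_cases hcov : ∃ k, c ∈ f^[k] '' S₀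
  · set k₀ := Nat.find hcov with hk₀def
    have hk₀ : c ∈ f^[k₀] '' S₀ := Nat.find_spec hcov
    have hmin : ∀ k, k < k₀ → c ∉ f^[k] '' S₀ := fun k hk => Nat.find_min hcov hk
    have claim : ∀ k, k ≤ k₀ → (f^[k] '' S₀ ⊆ Icc (0:ℝ) 1 ∧ IsOpen (f^[k] '' S₀) ∧
        IsPreconnected (f^[k] '' S₀)) := by
      intro k
      induction k with
      | zero =>
        intro _
        simp only [Function.iterate_zero, image_id]
        exact ⟨fun t ht => Ioo_subset_Icc_self (hsub01 ht), hopen, hpre⟩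
      | succ k ih =>
        intro hk
        have hkk : k < k₀ := by omega
        obtain ⟨s1, s2, s3⟩ := ih (le_of_lt hkk)
        have hsubk : f^[k] '' S₀ ⊆ Icc (0:ℝ) 1 \ {c} :=
          fun t ht => ⟨s1 ht, fun he => hmin k hkk (he ▸ ht)⟩
        have h3 := step_facts hL hsubk s3 s2
        have heq : f '' (f^[k] '' S₀) = f^[k+1] '' S₀ := by
          rw [← Set.image_comp, ← Function.iterate_succ']
        rw [heq] at h3
        exact h3
    have hopenk₀ : IsOpen (f^[k₀] '' S₀) := (claim k₀ (le_refl _)).2.1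
    have hev : ∀ᶠ j in atTop, z j ∈ f^[k₀] '' S₀ := hzc (hopenk₀.mem_nhds hk₀)
    obtain ⟨j, hjN, hjmem⟩ := ((eventually_ge_atTop N).and hev).exists
    obtain ⟨w, hw, hfw⟩ := hjmem
    refine ⟨w, hw, k₀ + φ j, ?_, concat k₀ hfw (hz j)⟩
    calc N ≤ j := hjN
    _ ≤ φ j := hφ.le_apply
    _ ≤ k₀ + φ j := Nat.le_add_left _ _
  · push_neg at hcov
    obtain ⟨T, hT, p₀, hp₀⟩ := hrec hcov
    exact (no_recur hL hWR hPA hopen hpre hsub01 hcov hT hp₀).elim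

end LZ
/-- For a contracting Lorenz map with neither weak repellers nor
periodic attractors, if `c ∈ α_f(x)` then `α_f(x)` contains the non-wandering set. -/
theorem lorenz_alpha_contains_nonwandering (f : ℝ → ℝ) (c : ℝ)
    (hL : IsLorenzMap 2 f c) (hC : IsContractingAt f c)
    (hWR : ∀ p ∈ Icc (0:ℝ) 1, ¬ IsWeakRepeller f p)
    (hPA : ¬ ∃ Λ : Set ℝ, IsPeriodicAttractor f Λ)
    (x : ℝ) (hx : x ∈ Icc (0:ℝ) 1) (hc : c ∈ alphaLim f c x) :
    nonWandering f ⊆ alphaLim f c x := by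
  obtain ⟨φ, z, hφ, hz, hzc⟩ := hc
  intro y hy
  obtain ⟨hyIcc, hyrec⟩ := hy
  by_cases hyc : y = c
  · rw [hyc]; exact ⟨φ, z, hφ, hz, hzc⟩
  have key : ∀ N : ℕ, ∀ ε : ℝ, 0 < ε →
      ∃ w n, |w - y| < ε ∧ N ≤ n ∧ w ∈ extPreimIter f c n x := by
    intro N ε hε
    rcases eq_or_lt_of_le hyIcc.1 with h0 | h0
    · -- y = 0
      set δ := min ε c / 2 with hδdef
      have hδpos : 0 < δ := by
        have := lt_min hε hL.c_pos
        rw [hδdef]; linarith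
      have hδc : δ < c := by
        have := min_le_right ε c
        rw [hδdef]; linarith [hL.c_pos]
      have hδε : δ < ε := by
        have := min_le_left ε c
        rw [hδdef]; linarith
      have hS : Ioo (0:ℝ) δ ⊆ Ioo (0:ℝ) 1 :=
        fun t ht => ⟨ht.1, lt_trans ht.2 (lt_trans hδc hL.c_lt_one)⟩
      have hrec : (∀ k : ℕ, c ∉ f^[k] '' (Ioo (0:ℝ) δ)) →
          ∃ T, 1 ≤ T ∧ ((Ioo (0:ℝ) δ) ∩ f^[T] '' (Ioo (0:ℝ) δ)).Nonempty := by
        intro _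
        refine ⟨1, le_refl 1, ?_⟩
        have h0m : (0:ℝ) ∈ Icc (0:ℝ) 1 \ {c} :=
          ⟨⟨le_refl 0, zero_le_one⟩, ne_of_lt hL.c_pos⟩
        obtain ⟨δ', hδ'pos, hδ'⟩ := Metric.continuousAt_iff.1 (LZ.contAt hL h0m) δ hδpos
        set t := min δ δ' / 2 with htdef
        have htpos : 0 < t := by
          have := lt_min hδpos hδ'pos
          rw [htdef]; linarith
        have ht1 : t < δ := by
          have := min_le_left δ δ'
          rw [htdef]; linarith
        have ht2 : t < δ' := by
          have := min_le_right δ δ'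
          rw [htdef]; linarith
        have htmem : t ∈ Ioo (0:ℝ) δ := ⟨htpos, ht1⟩
        have hft : f t ∈ Ioo (0:ℝ) δ := by
          constructor
          · have h := LZ.monoL hL ⟨le_refl (0:ℝ), hL.c_pos⟩
              ⟨le_of_lt htpos, lt_trans ht1 hδc⟩ htpos
            rw [hL.map_zero] at h
            exact h
          · have h := hδ' (x := t) (by rw [Real.dist_eq, sub_zero, abs_of_pos htpos]; exact ht2)
            rw [Real.dist_eq, hL.map_zero, sub_zero] at h
            exact lt_of_le_of_lt (le_abs_self _) h
        refine ⟨f t, hft, ?_⟩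
        rw [Function.iterate_one]
        exact mem_image_of_mem f htmem
      obtain ⟨w, hw, n, hn, hmem⟩ := LZ.reach hL hWR hPA hφ hz hzc
        isOpen_Ioo isPreconnected_Ioo hS hrec N
      refine ⟨w, n, ?_, hn, hmem⟩
      rw [← h0, sub_zero, abs_of_pos hw.1]
      exact lt_trans hw.2 hδε
    rcases eq_or_lt_of_le hyIcc.2 with h1 | h1
    · -- y = 1
      set δ := min ε (1 - c) / 2 with hδdef
      have h1c : (0:ℝ) < 1 - c := by linarith [hL.c_lt_one]
      have hδpos : 0 < δ := by
        have := lt_min hε h1c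
        rw [hδdef]; linarith
      have hδc : δ < 1 - c := by
        have := min_le_right ε (1 - c)
        rw [hδdef]; linarith
      have hδε : δ < ε := by
        have := min_le_left ε (1 - c)
        rw [hδdef]; linarith
      have hS : Ioo (1 - δ) 1 ⊆ Ioo (0:ℝ) 1 := by
        intro t ht
        refine ⟨?_, ht.2⟩
        have : c < 1 - δ := by linarith
        linarith [hL.c_pos, ht.1]
      have hrec : (∀ k : ℕ, c ∉ f^[k] '' (Ioo (1 - δ) 1)) →
          ∃ T, 1 ≤ T ∧ ((Ioo (1 - δ) 1) ∩ f^[T] '' (Ioo (1 - δ) 1)).Nonempty := by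
        intro _
        refine ⟨1, le_refl 1, ?_⟩
        have h1m : (1:ℝ) ∈ Icc (0:ℝ) 1 \ {c} :=
          ⟨⟨zero_le_one, le_refl 1⟩, (hL.c_lt_one).ne'⟩
        obtain ⟨δ', hδ'pos, hδ'⟩ := Metric.continuousAt_iff.1 (LZ.contAt hL h1m) δ hδpos
        set m := min δ δ' / 2 with hmdef
        have hmpos : 0 < m := by
          have := lt_min hδpos hδ'pos
          rw [hmdef]; linarith
        have hm1 : m < δ := by
          have := min_le_left δ δ'
          rw [hmdef]; linarith
        have hm2 : m < δ' := by
          have := min_le_right δ δ'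
          rw [hmdef]; linarith
        set t := 1 - m with htdef
        have htmem : t ∈ Ioo (1 - δ) 1 := ⟨by rw [htdef]; linarith, by rw [htdef]; linarith⟩
        have htc : c < t := by rw [htdef]; linarith
        have hft : f t ∈ Ioo (1 - δ) 1 := by
          constructor
          · have h := hδ' (x := t)
              (by rw [Real.dist_eq, htdef]; rw [show 1 - m - 1 = -m by ring, abs_neg,
                abs_of_pos hmpos]; exact hm2)
            rw [Real.dist_eq, hL.map_one] at h
            have := abs_lt.1 h
            linarith [this.1]
          · have h := LZ.monoR hL ⟨htc, by rw [htdef]; linarith⟩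
              ⟨hL.c_lt_one, le_refl (1:ℝ)⟩ (by rw [htdef]; linarith)
            rw [hL.map_one] at h
            exact h
        refine ⟨f t, hft, ?_⟩
        rw [Function.iterate_one]
        exact mem_image_of_mem f htmem
      obtain ⟨w, hw, n, hn, hmem⟩ := LZ.reach hL hWR hPA hφ hz hzc
        isOpen_Ioo isPreconnected_Ioo hS hrec N
      refine ⟨w, n, ?_, hn, hmem⟩
      rw [h1]
      rw [abs_lt]
      constructor <;> [linarith [hw.1]; linarith [hw.2]]
    · -- 0 < y < 1, y ≠ c
      have hyabs : (0:ℝ) < |y - c| := abs_pos.2 (sub_ne_zero.2 hyc)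
      set δ := min (min ε |y - c|) (min y (1 - y)) / 2 with hδdef
      have hδpos : 0 < δ := by
        have h1 := lt_min hε hyabs
        have h2 := lt_min h0 (by linarith : (0:ℝ) < 1 - y)
        have := lt_min h1 h2
        rw [hδdef]; linarith
      have hδε : δ < ε := by
        have h1 : min (min ε |y - c|) (min y (1 - y)) ≤ ε :=
          le_trans (min_le_left _ _) (min_le_left _ _)
        rw [hδdef]; linarith
      have hδy : δ < y := by
        have h1 : min (min ε |y - c|) (min y (1 - y)) ≤ y :=
          le_trans (min_le_right _ _) (min_le_left _ _)
        rw [hδdef]; linarith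
      have hδy1 : δ < 1 - y := by
        have h1 : min (min ε |y - c|) (min y (1 - y)) ≤ 1 - y :=
          le_trans (min_le_right _ _) (min_le_right _ _)
        rw [hδdef]; linarith
      have hS : Ioo (y - δ) (y + δ) ⊆ Ioo (0:ℝ) 1 :=
        fun t ht => ⟨by linarith [ht.1], by linarith [ht.2]⟩
      have hrec : (∀ k : ℕ, c ∉ f^[k] '' (Ioo (y - δ) (y + δ))) →
          ∃ T, 1 ≤ T ∧ ((Ioo (y - δ) (y + δ)) ∩ f^[T] '' (Ioo (y - δ) (y + δ))).Nonempty := by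
        intro _
        obtain ⟨n, hn, q, hq⟩ := hyrec (Ioo (y - δ) (y + δ)) isOpen_Ioo
          ⟨by linarith, by linarith⟩
        refine ⟨n, hn, q, hq.2, ?_⟩
        exact (image_mono inter_subset_left) hq.1
      obtain ⟨w, hw, n, hn, hmem⟩ := LZ.reach hL hWR hPA hφ hz hzc
        isOpen_Ioo isPreconnected_Ioo hS hrec N
      refine ⟨w, n, ?_, hn, hmem⟩
      have : |w - y| < δ := abs_lt.2 ⟨by linarith [hw.1], by linarith [hw.2]⟩
      linarith
  -- assemble the α-limit data
  have key2 : ∀ N k : ℕ, ∃ q : ℕ × ℝ, N < q.1 ∧ |q.2 - y| < 1/((k:ℝ)+1) ∧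
      q.2 ∈ extPreimIter f c q.1 x := by
    intro N k
    have hpos : (0:ℝ) < 1/((k:ℝ)+1) := by positivity
    obtain ⟨w, n, h1, h2, h3⟩ := key (N+1) (1/((k:ℝ)+1)) hpos
    exact ⟨(n, w), by omega, h1, h3⟩
  choose Q hQ1 hQ2 hQ3 using key2
  set ψ : ℕ → ℕ × ℝ := fun k => Nat.rec (Q 0 0) (fun k p => Q p.1 (k+1)) k with hψdef
  have hψsucc : ∀ k, ψ (k+1) = Q (ψ k).1 (k+1) := fun k => rfl
  have hψ0 : ψ 0 = Q 0 0 := rfl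
  have hmono : StrictMono (fun k => (ψ k).1) := by
    apply strictMono_nat_of_lt_succ
    intro k
    show (ψ k).1 < (Q (ψ k).1 (k+1)).1
    exact hQ1 (ψ k).1 (k+1)
  have hmem : ∀ k, (ψ k).2 ∈ extPreimIter f c ((ψ k).1) x := by
    intro k
    cases k with
    | zero => exact hQ3 0 0
    | succ k => rw [hψsucc]; exact hQ3 _ _
  have hclose : ∀ k, |(ψ k).2 - y| < 1/((k:ℝ)+1) := by
    intro k
    cases k with
    | zero => exact hQ2 0 0
    | succ k => rw [hψsucc]; exact hQ2 _ _
  refine ⟨fun k => (ψ k).1, fun k => (ψ k).2, hmono, hmem, ?_⟩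
  rw [tendsto_iff_dist_tendsto_zero]
  apply squeeze_zero (fun k => dist_nonneg) (fun k => ?_)
    tendsto_one_div_add_atTop_nhds_zero_nat
  rw [Real.dist_eq]
  exact le_of_lt (hclose k)
end
end
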